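/- Lower bound on the measure of an ε-concentration set for the Gabor QLCT: let f, φ ∈ L²(ℝ², ℍ) with ‖f‖₂ = ‖φ‖₂ = 1, let Σ ⊆ ℝ² × ℝ² be Lebesgue measurable, and let 0 ≤ ε ≤ 1. If ∫∫_Σ |G_φ f(ω, y)|² dω dy ≥ 1 − ε, then 4π² b₁ b₂ (1 − ε) ≤ m(Σ), where m(Σ) is the Lebesgue measure of Σ. -/

import Mathlib

open MeasureTheory
open scoped ENNReal NNReal

noncomputable section

/-- The quaternion imaginary unit `i`. -/
def qi : Quaternion ℝ := ⟨0, 1, 0, 0⟩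

/-- The quaternion imaginary unit `j`. -/
def qj : Quaternion ℝ := ⟨0, 0, 1, 0⟩

/-- The LCT kernel `(2πb)^(-1/2) exp((u/2)((a/b)x² - (2/b)xω + (d/b)ω² - π/2))`
with pure imaginary unit `u` and parameters `a`, `b`, `d`. -/
def qK (a b d : ℝ) (u : Quaternion ℝ) (x ω : ℝ) : Quaternion ℝ :=
  ((2 * Real.pi * b) ^ (-(1 : ℝ) / 2) : ℝ) •
    NormedSpace.exp
      ((((a / b) * x ^ 2 - (2 / b) * x * ω + (d / b) * ω ^ 2 - Real.pi / 2) / 2 : ℝ) • u)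

/-- The two-sided quaternion linear canonical transform. -/
def QLCT (a₁ b₁ d₁ a₂ b₂ d₂ : ℝ) (f : ℝ × ℝ → Quaternion ℝ) (ω : ℝ × ℝ) : Quaternion ℝ :=
  ∫ x : ℝ × ℝ, qK a₁ b₁ d₁ qi x.1 ω.1 * f x * qK a₂ b₂ d₂ qj x.2 ω.2

/-- The Gabor quaternion linear canonical transform with window `φ`. -/
def GQLCT (a₁ b₁ d₁ a₂ b₂ d₂ : ℝ) (φ f : ℝ × ℝ → Quaternion ℝ) (ω y : ℝ × ℝ) :
    Quaternion ℝ :=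
  ∫ x : ℝ × ℝ,
    qK a₁ b₁ d₁ qi x.1 ω.1 * f x * star (φ (x - y)) * qK a₂ b₂ d₂ qj x.2 ω.2

/-- The Euclidean norm on `ℝ × ℝ`. -/
def enorm2 (x : ℝ × ℝ) : ℝ := Real.sqrt (x.1 ^ 2 + x.2 ^ 2)

/-- The constant `D = ψ(1/2) - ln π`, where `ψ` is the digamma function. -/
def Dconst : ℝ := deriv (fun t : ℝ => Real.log (Real.Gamma t)) (1 / 2) - Real.log Real.pi

lemma norm_qK (a b d : ℝ) (hb : 0 < b) (u : Quaternion ℝ) (hu : u.re = 0) (x ω : ℝ) :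
    ‖qK a b d u x ω‖ = (2 * Real.pi * b) ^ (-(1 : ℝ) / 2) := by
  have hpos : (0:ℝ) < 2 * Real.pi * b := by positivity
  rw [qK, norm_smul, Quaternion.norm_exp]
  simp [Quaternion.re_smul, hu, abs_of_pos hpos,
    abs_of_nonneg (Real.rpow_nonneg hpos.le _)]

lemma gqlct_norm_le (a₁ b₁ d₁ a₂ b₂ d₂ : ℝ) (hb₁ : 0 < b₁) (hb₂ : 0 < b₂)
    (f φ : ℝ × ℝ → Quaternion ℝ) (hf : MemLp f 2 volume) (hφ : MemLp φ 2 volume)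
    (hfn : (∫ x : ℝ × ℝ, ‖f x‖ ^ 2) = 1) (hφn : (∫ x : ℝ × ℝ, ‖φ x‖ ^ 2) = 1)
    (ω y : ℝ × ℝ) :
    ‖GQLCT a₁ b₁ d₁ a₂ b₂ d₂ φ f ω y‖ ≤
      (2 * Real.pi * b₁) ^ (-(1 : ℝ) / 2) * (2 * Real.pi * b₂) ^ (-(1 : ℝ) / 2) := by
  set c₁ : ℝ := (2 * Real.pi * b₁) ^ (-(1 : ℝ) / 2)
  set c₂ : ℝ := (2 * Real.pi * b₂) ^ (-(1 : ℝ) / 2)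
  have hc₁ : 0 ≤ c₁ := Real.rpow_nonneg (by positivity) _
  have hc₂ : 0 ≤ c₂ := Real.rpow_nonneg (by positivity) _
  have hg : MemLp (fun x : ℝ × ℝ => φ (x - y)) 2 volume :=
    hφ.comp_measurePreserving (measurePreserving_sub_right volume y)
  have h2 : (ENNReal.ofReal (2:ℝ)) = (2 : ℝ≥0∞) := by norm_num
  have hCS : (∫ x : ℝ × ℝ, ‖f x‖ * ‖φ (x - y)‖) ≤ 1 := by
    have hpq : (2:ℝ).HolderConjugate 2 :=
      Real.holderConjugate_iff.mpr ⟨by norm_num, by norm_num⟩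
    have := integral_mul_norm_le_Lp_mul_Lq (μ := volume) hpq
      (by rw [h2]; exact hf) (by rw [h2]; exact hg)
    have hrw : ∀ (h : ℝ × ℝ → Quaternion ℝ), (∫ x : ℝ × ℝ, ‖h x‖ ^ (2:ℝ)) =
        (∫ x : ℝ × ℝ, ‖h x‖ ^ 2) := by
      intro h
      refine integral_congr_ae (Filter.Eventually.of_forall fun x => ?_)
      simp only [show ((2:ℝ)) = ((2:ℕ):ℝ) from by norm_num, Real.rpow_natCast]
    have htr : (∫ x : ℝ × ℝ, ‖φ (x - y)‖ ^ 2) = (∫ x : ℝ × ℝ, ‖φ x‖ ^ 2) :=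
      integral_sub_right_eq_self (fun x => ‖φ x‖ ^ 2) y
    calc (∫ x : ℝ × ℝ, ‖f x‖ * ‖φ (x - y)‖) ≤
        (∫ x : ℝ × ℝ, ‖f x‖ ^ (2:ℝ)) ^ ((1:ℝ)/2) *
          (∫ x : ℝ × ℝ, ‖φ (x - y)‖ ^ (2:ℝ)) ^ ((1:ℝ)/2) := this
      _ = 1 := by rw [hrw f, hrw (fun x => φ (x - y)), htr, hfn, hφn]; norm_num
  calc ‖GQLCT a₁ b₁ d₁ a₂ b₂ d₂ φ f ω y‖
      ≤ ∫ x : ℝ × ℝ, ‖qK a₁ b₁ d₁ qi x.1 ω.1 * f x * star (φ (x - y)) *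
          qK a₂ b₂ d₂ qj x.2 ω.2‖ := norm_integral_le_integral_norm _
    _ = ∫ x : ℝ × ℝ, (c₁ * c₂) * (‖f x‖ * ‖φ (x - y)‖) := by
        refine integral_congr_ae (Filter.Eventually.of_forall fun x => ?_)
        simp only [norm_mul, norm_star,
          norm_qK a₁ b₁ d₁ hb₁ qi rfl, norm_qK a₂ b₂ d₂ hb₂ qj rfl]
        ring
    _ = (c₁ * c₂) * ∫ x : ℝ × ℝ, ‖f x‖ * ‖φ (x - y)‖ := integral_const_mul _ _
    _ ≤ (c₁ * c₂) * 1 := by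
        exact mul_le_mul_of_nonneg_left hCS (mul_nonneg hc₁ hc₂)
    _ = c₁ * c₂ := by ring

theorem gqlct_concentration_measure_bound (a₁ b₁ c₁ d₁ a₂ b₂ c₂ d₂ : ℝ)
    (hdet₁ : a₁ * d₁ - b₁ * c₁ = 1) (hdet₂ : a₂ * d₂ - b₂ * c₂ = 1)
    (hb₁ : 0 < b₁) (hb₂ : 0 < b₂)
    (f φ : ℝ × ℝ → Quaternion ℝ) (hf : MemLp f 2 volume) (hφ : MemLp φ 2 volume)
    (hfn : (∫ x : ℝ × ℝ, ‖f x‖ ^ 2) = 1) (hφn : (∫ x : ℝ × ℝ, ‖φ x‖ ^ 2) = 1)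
    (S : Set ((ℝ × ℝ) × (ℝ × ℝ))) (hS : MeasurableSet S)
    (ε : ℝ) (hε0 : 0 ≤ ε) (hε1 : ε ≤ 1)
    (hconc : (∫ z in S, ‖GQLCT a₁ b₁ d₁ a₂ b₂ d₂ φ f z.1 z.2‖ ^ 2) ≥ 1 - ε) :
    ENNReal.ofReal (4 * Real.pi ^ 2 * b₁ * b₂ * (1 - ε)) ≤ volume S := by
  set C : ℝ := (2 * Real.pi * b₁) ^ (-(1 : ℝ) / 2) * (2 * Real.pi * b₂) ^ (-(1 : ℝ) / 2)
    with hC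
  have hπ : (0:ℝ) < Real.pi := Real.pi_pos
  have hC2 : 4 * Real.pi ^ 2 * b₁ * b₂ * C ^ 2 = 1 := by
    rw [hC, mul_pow, ← Real.rpow_natCast ((2 * Real.pi * b₁) ^ (-(1:ℝ)/2)) 2,
      ← Real.rpow_natCast ((2 * Real.pi * b₂) ^ (-(1:ℝ)/2)) 2,
      ← Real.rpow_mul (by positivity) , ← Real.rpow_mul (by positivity)]
    norm_num
    rw [Real.rpow_neg_one, Real.rpow_neg_one]
    field_simp
    ring
  have hA : (0:ℝ) < 4 * Real.pi ^ 2 * b₁ * b₂ := by positivity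
  have hCnn : 0 ≤ C := mul_nonneg (Real.rpow_nonneg (by positivity) _)
    (Real.rpow_nonneg (by positivity) _)
  have hCne : C ≠ 0 := by
    intro h
    rw [h] at hC2
    norm_num at hC2
  have hCpos : 0 < C := lt_of_le_of_ne hCnn (Ne.symm hCne)
  rcases eq_top_or_lt_top (volume S) with htop | hfin
  · rw [htop]; exact le_top
  rcases le_or_gt (1 - ε) 0 with hle | hpos
  · have : 4 * Real.pi ^ 2 * b₁ * b₂ * (1 - ε) ≤ 0 := by
      nlinarith [mul_nonneg hA.le (neg_nonneg.mpr hle)]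
    rw [ENNReal.ofReal_eq_zero.mpr this]; exact zero_le
  · set g : ((ℝ × ℝ) × (ℝ × ℝ)) → ℝ :=
      fun z => ‖GQLCT a₁ b₁ d₁ a₂ b₂ d₂ φ f z.1 z.2‖ ^ 2 with hgdef
    have hbound : ∀ z, g z ≤ C ^ 2 := by
      intro z
      exact pow_le_pow_left₀ (norm_nonneg _)
        (gqlct_norm_le a₁ b₁ d₁ a₂ b₂ d₂ hb₁ hb₂ f φ hf hφ hfn hφn z.1 z.2) 2
    have hint : IntegrableOn g S volume := by
      by_contra hni
      rw [hgdef] at hni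
      rw [MeasureTheory.integral_undef hni] at hconc
      linarith
    have hconst : IntegrableOn (fun _ : ((ℝ × ℝ) × (ℝ × ℝ)) => C ^ 2) S volume := by
      exact integrableOn_const hfin.ne
    have hle2 : (1 - ε) ≤ (volume S).toReal * C ^ 2 := by
      calc (1 - ε) ≤ ∫ z in S, g z := hconc
        _ ≤ ∫ z in S, C ^ 2 := by
            refine setIntegral_mono_on hint hconst hS fun z _ => hbound z
        _ = (volume S).toReal * C ^ 2 := by
            rw [setIntegral_const, smul_eq_mul, Measure.real]
    have h3 : (4 * Real.pi ^ 2 * b₁ * b₂) * ((volume S).toReal * C ^ 2) =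
        (volume S).toReal := by
      calc (4 * Real.pi ^ 2 * b₁ * b₂) * ((volume S).toReal * C ^ 2)
          = (volume S).toReal * (4 * Real.pi ^ 2 * b₁ * b₂ * C ^ 2) := by ring
        _ = (volume S).toReal := by rw [hC2]; ring
    have hfinal : 4 * Real.pi ^ 2 * b₁ * b₂ * (1 - ε) ≤ (volume S).toReal := by
      have := mul_le_mul_of_nonneg_left hle2 hA.le
      linarith
    exact ENNReal.ofReal_le_of_le_toReal hfinal
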